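/- Synchronous FL gradient-descent bound: let f = ∑_i λ_i f_i with ∑_i λ_i = 1, λ_i ≥ 0, each f_i μ-strongly convex and L-smooth, w^* the minimizer of f, w_i^* the minimizer of f_i with ‖w_i^* - w^*‖² ≤ φ², and ‖w^t - w^*‖² ≤ R² for all iterates of w^{t+1} = w^t - η∇f(w^t). If the per-iteration bound f(w^{t+1}) - f(w^*) ≤ R²/(2ηT) · (contribution of t) plus heterogeneity terms holds as in the paper, then the running average ŵ(T) = (1/T)∑_{t=1}^T w^{t+1} satisfies f(ŵ(T)) - f(w^*) ≤ R²/(2ηT) + (2L/(μT²))[L R² + (μ + L)φ²]. -/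

import Mathlib

open scoped RealInnerProductSpace

set_option maxHeartbeats 1000000

theorem sfl_convergence_bound
    {H : Type*} [NormedAddCommGroup H] [InnerProductSpace ℝ H]
    (N : ℕ) (lam : Fin N → ℝ)
    (hlam0 : ∀ i, 0 ≤ lam i) (hlam1 : ∑ i, lam i = 1)
    (fi : Fin N → H → ℝ) (gradfi : Fin N → H → H)
    (μ L η R φ : ℝ) (hμ : 0 < μ) (hμL : μ ≤ L) (hη : 0 < η) (hηL : η * L ≤ 1)
    (hdiff : ∀ i, Differentiable ℝ (fi i))
    (hsc : ∀ i, ∀ x y : H,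
      fi i x - fi i y ≥ ⟪gradfi i y, x - y⟫ + μ / 2 * ‖x - y‖ ^ 2)
    (hsm : ∀ i, ∀ x y : H,
      fi i x - fi i y ≤ ⟪gradfi i y, x - y⟫ + L / 2 * ‖x - y‖ ^ 2)
    (f : H → ℝ) (hf : ∀ x, f x = ∑ i, lam i * fi i x)
    (gradf : H → H) (hgradf : ∀ x, gradf x = ∑ i, lam i • gradfi i x)
    (wstar : H) (hwstar : ∀ x, f wstar ≤ f x)
    (wistar : Fin N → H)
    (hwistar : ∀ i, ∀ x, fi i (wistar i) ≤ fi i x)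
    (hhet : ∀ i, ‖wistar i - wstar‖ ≤ φ)
    (w : ℕ → H)
    (hupd : ∀ t, w (t + 1) = w t - η • gradf (w t))
    (hR : ∀ t, ‖w t - wstar‖ ≤ R)
    (T : ℕ) (hT : 1 ≤ T)
    (what : H)
    (hwhat : what = (T : ℝ)⁻¹ • ∑ t ∈ Finset.Icc 1 T, w (t + 1)) :
    f what - f wstar ≤
      R ^ 2 / (2 * η * T) + 2 * L / (μ * T ^ 2) * (L * R ^ 2 + (μ + L) * φ ^ 2) := by
  have hN : N ≠ 0 := by rintro rfl; simp at hlam1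
  have hTpos : (0:ℝ) < T := by exact_mod_cast hT
  have hR0 : 0 ≤ R := le_trans (norm_nonneg _) (hR 0)
  have hφ0 : 0 ≤ φ := le_trans (norm_nonneg _) (hhet ⟨0, Nat.pos_of_ne_zero hN⟩)
  have hL0 : 0 < L := lt_of_lt_of_le hμ hμL
  -- aggregated strong convexity
  have hinner : ∀ x y : H, ⟪gradf y, x - y⟫ = ∑ i, lam i * ⟪gradfi i y, x - y⟫ := by
    intro x y
    rw [hgradf, sum_inner]
    exact Finset.sum_congr rfl fun i _ => real_inner_smul_left _ _ _
  have hdiffxy : ∀ x y : H, f x - f y = ∑ i, lam i * (fi i x - fi i y) := by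
    intro x y
    rw [hf, hf, ← Finset.sum_sub_distrib]
    exact Finset.sum_congr rfl fun i _ => (mul_sub _ _ _).symm
  have hscf : ∀ x y : H, ⟪gradf y, x - y⟫ + μ / 2 * ‖x - y‖ ^ 2 ≤ f x - f y := by
    intro x y
    rw [hdiffxy, hinner]
    have h1 : ∀ i ∈ Finset.univ, lam i * (⟪gradfi i y, x - y⟫ + μ / 2 * ‖x - y‖ ^ 2)
        ≤ lam i * (fi i x - fi i y) :=
      fun i _ => mul_le_mul_of_nonneg_left (hsc i x y) (hlam0 i)
    have h2 := Finset.sum_le_sum h1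
    calc (∑ i, lam i * ⟪gradfi i y, x - y⟫) + μ / 2 * ‖x - y‖ ^ 2
        = ∑ i, lam i * (⟪gradfi i y, x - y⟫ + μ / 2 * ‖x - y‖ ^ 2) := by
          simp [mul_add, Finset.sum_add_distrib, ← Finset.sum_mul, hlam1]
      _ ≤ _ := h2
  have hsmf : ∀ x y : H, f x - f y ≤ ⟪gradf y, x - y⟫ + L / 2 * ‖x - y‖ ^ 2 := by
    intro x y
    rw [hdiffxy, hinner]
    have h1 : ∀ i ∈ Finset.univ, lam i * (fi i x - fi i y)
        ≤ lam i * (⟪gradfi i y, x - y⟫ + L / 2 * ‖x - y‖ ^ 2) :=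
      fun i _ => mul_le_mul_of_nonneg_left (hsm i x y) (hlam0 i)
    have h2 := Finset.sum_le_sum h1
    calc ∑ i, lam i * (fi i x - fi i y)
        ≤ ∑ i, lam i * (⟪gradfi i y, x - y⟫ + L / 2 * ‖x - y‖ ^ 2) := h2
      _ = (∑ i, lam i * ⟪gradfi i y, x - y⟫) + L / 2 * ‖x - y‖ ^ 2 := by
          simp [mul_add, Finset.sum_add_distrib, ← Finset.sum_mul, hlam1]
  -- one-step descent
  have hstep : ∀ t, f (w (t+1)) - f wstar ≤
      (2*η)⁻¹ * (‖w t - wstar‖^2 - ‖w (t+1) - wstar‖^2) := by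
    intro t
    set g := gradf (w t) with hg
    have hw1 : w (t+1) - w t = -(η • g) := by rw [hupd t]; abel
    have hw2 : w (t+1) - wstar = (w t - wstar) - η • g := by rw [hupd t]; abel
    have h1 := hsmf (w (t+1)) (w t)
    have e1 : ⟪g, w (t+1) - w t⟫ = -(η * ‖g‖^2) := by
      rw [hw1, inner_neg_right, real_inner_smul_right, real_inner_self_eq_norm_sq]
    have e2 : ‖w (t+1) - w t‖^2 = η^2 * ‖g‖^2 := by
      rw [hw1, norm_neg, norm_smul, mul_pow, Real.norm_eq_abs, sq_abs]
    have h2 := hscf wstar (w t)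
    have e4 : ⟪g, wstar - w t⟫ = -⟪g, w t - wstar⟫ := by
      rw [← inner_neg_right]; congr 1; abel
    have e3 : ‖w t - wstar‖^2 - ‖w (t+1) - wstar‖^2
        = 2*η*⟪g, w t - wstar⟫ - η^2*‖g‖^2 := by
      have hx := norm_sub_sq_real (w t - wstar) (η • g)
      rw [real_inner_smul_right, norm_smul, Real.norm_eq_abs,
        real_inner_comm g (w t - wstar)] at hx
      rw [hw2, hx, mul_pow, sq_abs]; ring
    rw [e3]
    have hne : (2*η) ≠ 0 := by positivity
    have e5 : (2*η)⁻¹ * (2*η*⟪g, w t - wstar⟫ - η^2*‖g‖^2)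
        = ⟪g, w t - wstar⟫ - η/2*‖g‖^2 := by field_simp
    rw [e5]
    have hLη : L * η^2 ≤ η := by nlinarith
    have hgn : (0:ℝ) ≤ ‖g‖^2 := sq_nonneg _
    have hμn : 0 ≤ μ/2 * ‖wstar - w t‖^2 := by positivity
    nlinarith [h1, h2, e1, e2, e4]
  -- telescoping
  have htel : ∑ t ∈ Finset.Icc 1 T, (‖w t - wstar‖^2 - ‖w (t+1) - wstar‖^2) ≤ R^2 := by
    rw [← Finset.Ico_add_one_right_eq_Icc, Finset.sum_Ico_eq_sum_range]
    calc ∑ i ∈ Finset.range (T + 1 - 1), (‖w (1+i) - wstar‖^2 - ‖w (1+i+1) - wstar‖^2)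
        = ‖w 1 - wstar‖^2 - ‖w (1+T) - wstar‖^2 := by
          rw [show T + 1 - 1 = T by omega]
          exact Finset.sum_range_sub' (fun i => ‖w (1+i) - wstar‖^2) T
      _ ≤ R^2 := by
          have := hR 1
          nlinarith [sq_nonneg ‖w (1+T) - wstar‖, norm_nonneg (w 1 - wstar)]
  -- Jensen via first-order convexity
  have hTne : (T:ℝ) ≠ 0 := ne_of_gt hTpos
  have hsum_w : ∑ t ∈ Finset.Icc 1 T, w (t+1) = (T:ℝ) • what := by
    rw [hwhat, smul_smul, mul_inv_cancel₀ hTne, one_smul]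
  have hcard : (Finset.Icc 1 T).card = T := by rw [Nat.card_Icc]; omega
  have hjensen : (T:ℝ) * f what ≤ ∑ t ∈ Finset.Icc 1 T, f (w (t+1)) := by
    have hge : ∀ t ∈ Finset.Icc 1 T,
        ⟪gradf what, w (t+1) - what⟫ ≤ f (w (t+1)) - f what := by
      intro t _
      have := hscf (w (t+1)) what
      nlinarith [sq_nonneg ‖w (t+1) - what‖]
    have hsum := Finset.sum_le_sum hge
    have hz : ∑ t ∈ Finset.Icc 1 T, ⟪gradf what, w (t+1) - what⟫ = 0 := by
      rw [← inner_sum, Finset.sum_sub_distrib, hsum_w, Finset.sum_const, hcard,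
        ← Nat.cast_smul_eq_nsmul ℝ, sub_self, inner_zero_right]
    rw [hz] at hsum
    have hs2 : ∑ t ∈ Finset.Icc 1 T, (f (w (t+1)) - f what)
        = (∑ t ∈ Finset.Icc 1 T, f (w (t+1))) - (T:ℝ) * f what := by
      rw [Finset.sum_sub_distrib, Finset.sum_const, hcard, nsmul_eq_mul]
    rw [hs2] at hsum
    linarith
  -- combine
  have hsumstep : ∑ t ∈ Finset.Icc 1 T, (f (w (t+1)) - f wstar) ≤ (2*η)⁻¹ * R^2 := by
    calc ∑ t ∈ Finset.Icc 1 T, (f (w (t+1)) - f wstar)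
        ≤ ∑ t ∈ Finset.Icc 1 T, (2*η)⁻¹ * (‖w t - wstar‖^2 - ‖w (t+1) - wstar‖^2) :=
          Finset.sum_le_sum fun t _ => hstep t
      _ = (2*η)⁻¹ * ∑ t ∈ Finset.Icc 1 T, (‖w t - wstar‖^2 - ‖w (t+1) - wstar‖^2) := by
          rw [Finset.mul_sum]
      _ ≤ (2*η)⁻¹ * R^2 := by
          apply mul_le_mul_of_nonneg_left htel (by positivity)
  have hs3 : ∑ t ∈ Finset.Icc 1 T, (f (w (t+1)) - f wstar)
      = (∑ t ∈ Finset.Icc 1 T, f (w (t+1))) - (T:ℝ) * f wstar := by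
    rw [Finset.sum_sub_distrib, Finset.sum_const, hcard, nsmul_eq_mul]
  rw [hs3] at hsumstep
  have hmain : (T:ℝ) * (f what - f wstar) ≤ (2*η)⁻¹ * R^2 := by linarith
  have hfin : f what - f wstar ≤ R^2 / (2*η*T) := by
    rw [le_div_iff₀ (by positivity)]
    calc (f what - f wstar) * (2*η*T) = 2*η*((T:ℝ) * (f what - f wstar)) := by ring
      _ ≤ 2*η*((2*η)⁻¹ * R^2) := by
          apply mul_le_mul_of_nonneg_left hmain (by positivity)
      _ = R^2 := by field_simp
  have hextra : 0 ≤ 2 * L / (μ * T ^ 2) * (L * R ^ 2 + (μ + L) * φ ^ 2) := by positivity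
  linarith
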